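/- For any positive integer k, the map (z₁,…,zₙ,w) ↦ (√k·z₁,…,√k·zₙ,wᵏ) is a proper map of the Fock-Bargmann-Hartogs domain D_{n,1}(μ) to itself, i.e., the preimage of any compact subset of D_{n,1}(μ) is compact. -/

import Mathlib

/-- For any positive integer `k`, the map `(z,w) ↦ (√k·z, wᵏ)`, restricted to the
Fock-Bargmann-Hartogs domain `D_{n,1}(μ) = {(z,w) : |w|² < exp(-μ‖z‖²)}` (which it
maps into itself), is a proper map of `D_{n,1}(μ)` to itself. -/
theorem stmt1 (n : ℕ) (hn : 1 ≤ n) (μ : ℝ) (hμ : 0 < μ) (k : ℕ) (hk : 1 ≤ k)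
    (D : Set (EuclideanSpace ℂ (Fin n) × ℂ))
    (hD : D = {p | ‖p.2‖ ^ 2 < Real.exp (-μ * ‖p.1‖ ^ 2)})
    (F : EuclideanSpace ℂ (Fin n) × ℂ → EuclideanSpace ℂ (Fin n) × ℂ)
    (hF : F = fun p => ((Real.sqrt k : ℝ) • p.1, p.2 ^ k))
    (hmaps : Set.MapsTo F D D) :
    IsProperMap (Set.MapsTo.restrict F D D hmaps) := by
  have hFc : Continuous F := by
    rw [hF]
    exact ((continuous_const (y := (Real.sqrt k : ℝ))).smul continuous_fst).prodMk (continuous_snd.pow k)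
  have hDopen : IsOpen D := by
    rw [hD]
    exact isOpen_lt (by continuity) (by continuity)
  -- key: F ⁻¹' D ⊆ D
  have key : ∀ p : EuclideanSpace ℂ (Fin n) × ℂ, F p ∈ D → p ∈ D := by
    intro p hp
    rw [hD, hF] at hp
    rw [hD]
    simp only [Set.mem_setOf_eq] at hp ⊢
    have h1 : ‖p.2 ^ k‖ ^ 2 = (‖p.2‖ ^ 2) ^ k := by rw [norm_pow]; ring
    have h2 : ‖(Real.sqrt k : ℝ) • p.1‖ ^ 2 = (k : ℝ) * ‖p.1‖ ^ 2 := by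
      rw [norm_smul, Real.norm_eq_abs, abs_of_nonneg (Real.sqrt_nonneg _), mul_pow,
        Real.sq_sqrt (by positivity)]
    rw [h1, h2] at hp
    have h3 : Real.exp (-μ * ((k : ℝ) * ‖p.1‖ ^ 2))
        = (Real.exp (-μ * ‖p.1‖ ^ 2)) ^ k := by
      rw [← Real.exp_nat_mul]; ring_nf
    rw [h3] at hp
    exact lt_of_pow_lt_pow_left₀ k (Real.exp_nonneg _) hp
  haveI : LocallyCompactSpace D := hDopen.locallyCompactSpace
  rw [isProperMap_iff_isCompact_preimage]
  constructor
  · exact hFc.restrict hmaps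
  · intro K hK
    set K' : Set (EuclideanSpace ℂ (Fin n) × ℂ) := Subtype.val '' K with hK'def
    have hK'c : IsCompact K' := hK.image continuous_subtype_val
    have hK'D : K' ⊆ D := Subtype.coe_image_subset D K
    have hSD : F ⁻¹' K' ⊆ D := fun p hp => key p (hK'D hp)
    have hSclosed : IsClosed (F ⁻¹' K') := hK'c.isClosed.preimage hFc
    obtain ⟨r, hr⟩ := hK'c.isBounded.subset_closedBall 0
    have hSbdd : Bornology.IsBounded (F ⁻¹' K') := by
      apply Bornology.IsBounded.subset
        (Metric.isBounded_closedBall (x := (0 : EuclideanSpace ℂ (Fin n) × ℂ)) (r := max r 1))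
      intro p hp
      have hFp : ‖F p‖ ≤ r := by
        have := hr hp
        simpa [Metric.mem_closedBall, dist_zero_right] using this
      rw [hF] at hFp
      rw [Prod.norm_def] at hFp
      simp only [sup_le_iff] at hFp
      have hk1 : (1 : ℝ) ≤ Real.sqrt k := by
        rw [show (1:ℝ) = Real.sqrt 1 by simp]
        exact Real.sqrt_le_sqrt (by exact_mod_cast hk)
      have h1 : ‖p.1‖ ≤ r := by
        have : ‖((Real.sqrt k : ℝ) • p.1 : EuclideanSpace ℂ (Fin n))‖
            = Real.sqrt k * ‖p.1‖ := by
          rw [norm_smul, Real.norm_eq_abs, abs_of_nonneg (Real.sqrt_nonneg _)]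
        nlinarith [hFp.1, norm_nonneg p.1]
      have h2 : ‖p.2‖ ≤ 1 := by
        have hpD := hSD hp
        rw [hD] at hpD
        simp only [Set.mem_setOf_eq] at hpD
        have : ‖p.2‖ ^ 2 < 1 := lt_of_lt_of_le hpD (Real.exp_le_one_iff.mpr (by nlinarith [sq_nonneg ‖p.1‖]))
        nlinarith [norm_nonneg p.2]
      rw [Metric.mem_closedBall, dist_zero_right, Prod.norm_def]
      exact sup_le (le_trans h1 (le_max_left _ _)) (le_trans h2 (le_max_right _ _))
    have hScomp : IsCompact (F ⁻¹' K') :=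
      Metric.isCompact_of_isClosed_isBounded hSclosed hSbdd
    rw [Topology.IsEmbedding.isCompact_iff Topology.IsEmbedding.subtypeVal]
    have himg : Subtype.val '' (Set.MapsTo.restrict F D D hmaps ⁻¹' K) = F ⁻¹' K' := by
      ext x
      constructor
      · rintro ⟨⟨y, hy⟩, hmem, rfl⟩
        exact ⟨Set.MapsTo.restrict F D D hmaps ⟨y, hy⟩, hmem, rfl⟩
      · intro hx
        have hxD : x ∈ D := hSD hx
        refine ⟨⟨x, hxD⟩, ?_, rfl⟩
        obtain ⟨q, hqK, hq⟩ := hx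
        have hEq : Set.MapsTo.restrict F D D hmaps ⟨x, hxD⟩ = q := Subtype.ext hq.symm
        simp only [Set.mem_preimage]
        exact hEq ▸ hqK
    rw [himg]
    exact hScomp
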